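/- For any graph G on n vertices, m_G[1,n] ≥ Δ(G), the maximum vertex degree of G. -/

import Mathlib

open scoped Classical

/-- The `i`-th Laplacian eigenvalue of `G` (in the unsorted indexing given by
the spectral theorem applied to the Laplacian matrix). -/
noncomputable def lapEig {V : Type*} [Fintype V] [DecidableEq V] (G : SimpleGraph V) : V → ℝ :=
  (G.posSemidef_lapMatrix (R := ℝ)).isHermitian.eigenvalues

/-- The number of Laplacian eigenvalues of `G` (with multiplicity) satisfying `P`. -/
noncomputable def mCount {V : Type*} [Fintype V] [DecidableEq V] (G : SimpleGraph V)
    (P : ℝ → Prop) : ℕ :=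
  (Finset.univ.filter fun i => P (lapEig G i)).card

/-- `S` is a dominating set of `G`. -/
def IsDomSet {V : Type*} (G : SimpleGraph V) (S : Finset V) : Prop :=
  ∀ v ∉ S, ∃ u ∈ S, G.Adj u v

/-- The domination number of `G`. -/
noncomputable def domNum {V : Type*} [Fintype V] (G : SimpleGraph V) : ℕ :=
  sInf {k | ∃ S : Finset V, IsDomSet G S ∧ S.card = k}

namespace MGAux

open Finset Matrix

lemma quadform {n : ℕ} (G : SimpleGraph (Fin n)) (x : Fin n → ℝ) :
    x ⬝ᵥ (G.lapMatrix ℝ *ᵥ x) =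
      (∑ i, ∑ j, if G.Adj i j then (x i - x j)^2 else 0) / 2 := by
  rw [← Matrix.toLinearMap₂'_apply', SimpleGraph.lapMatrix_toLinearMap₂']

/-- The orthonormal basis of eigenvectors of the Laplacian. -/
noncomputable def eigB {n : ℕ} (G : SimpleGraph (Fin n)) :
    OrthonormalBasis (Fin n) ℝ (EuclideanSpace ℝ (Fin n)) :=
  (G.posSemidef_lapMatrix (R := ℝ)).isHermitian.eigenvectorBasis

lemma eigB_norm {n : ℕ} (G : SimpleGraph (Fin n)) (i : Fin n) :
    ∑ j, (eigB G i j)^2 = 1 := by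
  have h := (eigB G).orthonormal.1 i
  have h2 : (inner ℝ (eigB G i) (eigB G i) : ℝ) = 1 := by
    rw [real_inner_self_eq_norm_sq, h]; norm_num
  rw [PiLp.inner_apply] at h2
  simpa [sq] using h2

lemma eigB_mulVec {n : ℕ} (G : SimpleGraph (Fin n)) (i : Fin n) :
    G.lapMatrix ℝ *ᵥ (eigB G i) = lapEig G i • ⇑(eigB G i) :=
  (G.posSemidef_lapMatrix (R := ℝ)).isHermitian.mulVec_eigenvectorBasis i

lemma sum_sub_sq {n : ℕ} (w : Fin n → ℝ) :
    ∑ a, ∑ b, (w a - w b)^2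
      = (n : ℝ) * (∑ j, w j ^ 2) + (n:ℝ) * (∑ j, w j ^2) - 2 * ((∑ j, w j) * (∑ j, w j)) := by
  have h : ∀ a b : ℝ, (a - b)^2 = a^2 - 2*(a*b) + b^2 := fun a b => by ring
  simp_rw [h, sum_add_distrib, sum_sub_distrib, ← mul_sum, ← sum_mul, sum_const, card_univ,
    Fintype.card_fin, nsmul_eq_mul]
  rw [← mul_sum]
  ring

lemma eig_le_n {n : ℕ} (G : SimpleGraph (Fin n)) (w : Fin n → ℝ) (μ : ℝ)
    (hmul : G.lapMatrix ℝ *ᵥ w = μ • w) (hnorm : ∑ j, w j ^ 2 = 1) : μ ≤ (n : ℝ) := by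
  have hq : w ⬝ᵥ (G.lapMatrix ℝ *ᵥ w) = μ := by
    rw [hmul, dotProduct_smul, smul_eq_mul]
    have h : w ⬝ᵥ w = 1 := by simpa [dotProduct, sq] using hnorm
    rw [h, mul_one]
  have h1 : ∑ a, ∑ b, (if G.Adj a b then (w a - w b)^2 else 0) ≤ ∑ a, ∑ b, (w a - w b)^2 := by
    refine sum_le_sum fun a _ => sum_le_sum fun b _ => ?_
    split
    · exact le_refl _
    · positivity
  have h2 := sum_sub_sq w
  rw [← hq, quadform]
  nlinarith [mul_self_nonneg (∑ j, w j)]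

lemma lapEig_le {n : ℕ} (G : SimpleGraph (Fin n)) (i : Fin n) :
    lapEig G i ≤ (n : ℝ) :=
  eig_le_n G _ _ (eigB_mulVec G i) (eigB_norm G i)

lemma inner_eq_dot {n : ℕ} (x y : EuclideanSpace ℝ (Fin n)) :
    (inner ℝ x y : ℝ) = ∑ j, x j * y j := by
  simp [PiLp.inner_apply, mul_comm]

lemma dot_eigvec {n : ℕ} (G : SimpleGraph (Fin n)) (x w : Fin n → ℝ) (μ : ℝ)
    (hmul : G.lapMatrix ℝ *ᵥ w = μ • w) :
    w ⬝ᵥ (G.lapMatrix ℝ *ᵥ x) = μ * (w ⬝ᵥ x) := by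
  rw [Matrix.dotProduct_mulVec, ← Matrix.mulVec_transpose,
    (G.isSymm_lapMatrix ℝ).eq, hmul, smul_dotProduct, smul_eq_mul]

lemma key1 {n : ℕ} (G : SimpleGraph (Fin n)) (x : EuclideanSpace ℝ (Fin n)) :
    (fun j => x j) ⬝ᵥ (G.lapMatrix ℝ *ᵥ fun j => x j)
      = ∑ i, lapEig G i * (inner ℝ (eigB G i) x : ℝ)^2 := by
  set y : EuclideanSpace ℝ (Fin n) := WithLp.toLp 2 (G.lapMatrix ℝ *ᵥ fun j => x j : Fin n → ℝ) with hy
  have hsum := OrthonormalBasis.sum_inner_mul_inner (eigB G) x y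
  have hxy : (inner ℝ x y : ℝ) = (fun j => x j) ⬝ᵥ (G.lapMatrix ℝ *ᵥ fun j => x j) := by
    rw [inner_eq_dot]; rfl
  have hby : ∀ i, (inner ℝ (eigB G i) y : ℝ) = lapEig G i * (inner ℝ (eigB G i) x : ℝ) := by
    intro i
    rw [inner_eq_dot, inner_eq_dot]
    exact dot_eigvec G (fun j => x j) (fun j => eigB G i j) _ (eigB_mulVec G i)
  rw [← hxy, ← hsum]
  refine Finset.sum_congr rfl fun i _ => ?_
  rw [hby i, real_inner_comm x (eigB G i)]
  ring

lemma key2 {n : ℕ} (G : SimpleGraph (Fin n)) (x : EuclideanSpace ℝ (Fin n)) :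
    ∑ i, (inner ℝ (eigB G i) x : ℝ)^2 = ∑ j, x j ^ 2 := by
  have hsum := OrthonormalBasis.sum_inner_mul_inner (eigB G) x x
  have hxx : (inner ℝ x x : ℝ) = ∑ j, x j ^ 2 := by
    rw [inner_eq_dot]; simp [sq]
  rw [← hxx, ← hsum]
  refine Finset.sum_congr rfl fun i _ => ?_
  rw [real_inner_comm x (eigB G i)]
  ring

lemma quad_ge {n : ℕ} (G : SimpleGraph (Fin n)) (v : Fin n) (x : Fin n → ℝ)
    (hx : ∀ w, w ∉ G.neighborFinset v → x w = 0) :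
    ∑ j, x j ^ 2 ≤ x ⬝ᵥ (G.lapMatrix ℝ *ᵥ x) := by
  rw [quadform]
  have hxv : x v = 0 := hx v (by simp)
  set f : Fin n → Fin n → ℝ := fun a b => if G.Adj a b then (x a - x b)^2 else 0 with hf
  have hfnn : ∀ a b, 0 ≤ f a b := by
    intro a b; simp only [hf]; split
    · positivity
    · exact le_refl 0
  have hrow : ∑ b, f v b = ∑ b, x b ^ 2 := by
    refine sum_congr rfl fun b _ => ?_
    simp only [hf]
    by_cases h : G.Adj v b
    · rw [if_pos h, hxv]; ring
    · rw [if_neg h, hx b (by simpa using h)]; ring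
  have hsplit : ∑ a, ∑ b, f a b = (∑ b, f v b) + ∑ a ∈ univ.erase v, ∑ b, f a b :=
    (Finset.add_sum_erase univ _ (mem_univ v)).symm
  have h1 : ∑ a ∈ univ.erase v, f a v ≤ ∑ a ∈ univ.erase v, ∑ b, f a b :=
    sum_le_sum fun a _ => single_le_sum (fun b _ => hfnn a b) (mem_univ v)
  have h2 : ∑ a ∈ univ.erase v, f a v = ∑ a ∈ univ.erase v, x a ^ 2 := by
    refine sum_congr rfl fun a ha => ?_
    have hav : a ≠ v := (Finset.mem_erase.1 ha).1
    simp only [hf]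
    by_cases h : G.Adj a v
    · rw [if_pos h, hxv]; ring
    · rw [if_neg h, hx a (by simp [SimpleGraph.mem_neighborFinset, G.adj_comm v a, h])]
      ring
  have h3 : ∑ a ∈ univ.erase v, x a ^ 2 = ∑ a, x a ^ 2 :=
    Finset.sum_erase _ (by rw [hxv]; ring)
  linarith

end MGAux

open Finset Matrix MGAux in
/-- For any graph $G$, $m_G[1,n] \ge \Delta(G)$. -/
theorem maxDegree_le_mCount_Icc_one_n {n : ℕ} (G : SimpleGraph (Fin n)) :
    G.maxDegree ≤ mCount G (fun x => 1 ≤ x ∧ x ≤ (n : ℝ)) := by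
  rcases Nat.eq_zero_or_pos n with rfl | hn
  · have : G.maxDegree = 0 := by
      simp only [SimpleGraph.maxDegree]
      rfl
    simp [this]
  have : Nonempty (Fin n) := ⟨⟨0, hn⟩⟩
  obtain ⟨v, hv⟩ := G.exists_maximal_degree_vertex
  -- the two subspaces
  set S : Finset (Fin n) := univ.filter (fun i => lapEig G i < 1) with hS
  set P : Submodule ℝ (EuclideanSpace ℝ (Fin n)) :=
    Submodule.span ℝ (Set.range fun i : ↥S => eigB G i) with hP
  set N : Finset (Fin n) := G.neighborFinset v with hN
  set Q : Submodule ℝ (EuclideanSpace ℝ (Fin n)) :=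
    Submodule.span ℝ (Set.range fun u : ↥N => EuclideanSpace.single (u : Fin n) (1:ℝ)) with hQ
  -- dimensions
  have hPdim : Module.finrank ℝ P = S.card := by
    rw [hP, finrank_span_eq_card ?_, Fintype.card_coe]
    exact ((eigB G).orthonormal.comp _ Subtype.val_injective).linearIndependent
  have hQdim : Module.finrank ℝ Q = N.card := by
    have ho : Orthonormal ℝ (fun u : ↥N => EuclideanSpace.single (u : Fin n) (1:ℝ)) := by
      have h := (EuclideanSpace.basisFun (Fin n) ℝ).orthonormal.comp
        (fun u : ↥N => (u : Fin n)) Subtype.val_injective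
      have heq : (fun u : ↥N => EuclideanSpace.single (u : Fin n) (1:ℝ))
          = (⇑(EuclideanSpace.basisFun (Fin n) ℝ) ∘ fun u : ↥N => (u : Fin n)) := by
        funext u; simp [EuclideanSpace.basisFun_apply]
      rw [heq]; exact h
    rw [hQ, finrank_span_eq_card ho.linearIndependent, Fintype.card_coe]
  -- trivial intersection
  have hPQ : P ⊓ Q = ⊥ := by
    rw [Submodule.eq_bot_iff]
    rintro x ⟨hxP, hxQ⟩
    by_contra hx0
    -- x vanishes outside N
    have hvan : ∀ w, w ∉ N → x w = 0 := by
      intro w hw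
      refine Submodule.span_induction (p := fun z _ => z w = 0) ?_ rfl ?_ ?_ hxQ
      · rintro z ⟨u, rfl⟩
        have huw : w ≠ (u : Fin n) := fun h => hw (h ▸ u.2)
        simp [EuclideanSpace.single_apply, huw]
      · intro a b _ _ ha hb
        have : (a + b) w = a w + b w := rfl
        rw [this, ha, hb, add_zero]
      · intro c a _ ha
        have : (c • a) w = c * a w := rfl
        rw [this, ha, mul_zero]
    -- inner products with eigenvectors of eigenvalue ≥ 1 vanish
    have hcoef : ∀ i, i ∉ S → (inner ℝ (eigB G i) x : ℝ) = 0 := by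
      intro i hi
      refine Submodule.span_induction (p := fun z _ => (inner ℝ (eigB G i) z : ℝ) = 0) ?_
        (by simp) ?_ ?_ hxP
      · rintro z ⟨j, rfl⟩
        have hij : i ≠ (j : Fin n) := by
          rintro rfl; exact hi j.2
        exact (eigB G).orthonormal.2 hij
      · intro a b _ _ ha hb
        rw [inner_add_right, ha, hb, add_zero]
      · intro c a _ ha
        rw [inner_smul_right, ha]; simp
    -- positivity of the norm
    have hnpos : 0 < ∑ j, x j ^ 2 := by
      have hex : ∃ j, x j ≠ 0 := by
        by_contra h
        push_neg at h
        exact hx0 (PiLp.ext fun j => h j)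
      obtain ⟨j, hj⟩ := hex
      refine Finset.sum_pos' (fun a _ => sq_nonneg _) ⟨j, mem_univ j, ?_⟩
      positivity
    -- quadratic form bounds
    have hge : ∑ j, x j ^ 2 ≤ (fun j => x j) ⬝ᵥ (G.lapMatrix ℝ *ᵥ fun j => x j) :=
      quad_ge G v (fun j => x j) hvan
    have heq := key1 G x
    have heq2 := key2 G x
    -- the strict bound
    have hex : ∃ i ∈ univ, (inner ℝ (eigB G i) x : ℝ)^2 ≠ 0 := by
      by_contra h
      push_neg at h
      have : ∑ i, (inner ℝ (eigB G i) x : ℝ)^2 = 0 :=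
        Finset.sum_eq_zero fun i hi => h i hi
      rw [heq2] at this
      exact absurd this (ne_of_gt hnpos)
    obtain ⟨i0, _, hi0⟩ := hex
    have hi0S : i0 ∈ S := by
      by_contra h
      exact hi0 (by rw [hcoef i0 h]; ring)
    have hlt : ∑ i, lapEig G i * (inner ℝ (eigB G i) x : ℝ)^2
        < ∑ i, (inner ℝ (eigB G i) x : ℝ)^2 := by
      refine Finset.sum_lt_sum (fun i _ => ?_) ⟨i0, mem_univ i0, ?_⟩
      · by_cases hiS : i ∈ S
        · have h1 : lapEig G i < 1 := (mem_filter.1 hiS).2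
          nlinarith [sq_nonneg ((inner ℝ (eigB G i) x : ℝ))]
        · rw [hcoef i hiS]; simp
      · have h1 : lapEig G i0 < 1 := (mem_filter.1 hi0S).2
        have h2 : 0 < (inner ℝ (eigB G i0) x : ℝ)^2 :=
          lt_of_le_of_ne (sq_nonneg _) (Ne.symm hi0)
        nlinarith
    rw [heq] at hge
    rw [← heq2] at hnpos
    linarith
  -- rank inequality
  haveI : FiniteDimensional ℝ (EuclideanSpace ℝ (Fin n)) := by infer_instance
  have hrank : S.card + N.card ≤ n := by
    have h1 := Submodule.finrank_sup_add_finrank_inf_eq P Q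
    rw [hPQ] at h1
    have h2 : Module.finrank ℝ (P ⊔ Q : Submodule ℝ (EuclideanSpace ℝ (Fin n)))
        ≤ Module.finrank ℝ (EuclideanSpace ℝ (Fin n)) := Submodule.finrank_le _
    rw [finrank_euclideanSpace, Fintype.card_fin] at h2
    simp only [finrank_bot, add_zero] at h1
    rw [hPdim, hQdim] at h1
    omega
  -- counting
  have hcount : mCount G (fun x => 1 ≤ x ∧ x ≤ (n : ℝ)) + S.card = n := by
    have hm : mCount G (fun x => 1 ≤ x ∧ x ≤ (n : ℝ))
        = (univ.filter fun i => ¬ lapEig G i < 1).card := by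
      unfold mCount
      congr 1
      ext i
      simp only [mem_filter, mem_univ, true_and]
      constructor
      · rintro ⟨h1, _⟩; exact not_lt.2 h1
      · intro h; exact ⟨not_lt.1 h, lapEig_le G i⟩
    have hcc := Finset.card_filter_add_card_filter_not
      (s := (univ : Finset (Fin n))) (p := fun i => lapEig G i < 1)
    rw [Finset.card_univ, Fintype.card_fin] at hcc
    rw [← hS] at hcc
    rw [hm]
    omega
  have hdeg : G.maxDegree = N.card := by
    rw [hv, hN, SimpleGraph.card_neighborFinset_eq_degree]
  omega
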